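/- Let a, b ∈ ℝⁿ be D-unit vectors (‖a‖_D = ‖b‖_D = 1) with ⟨r⁰, a⟩_D = ⟨r⁰, b⟩_D = 0 for some r⁰ ∈ ℝⁿ, let c := ⟨a, b⟩_D with c² < 1, let β > 0 and β_i ∈ ℝ with |β_i| ≤ β, and set z := r⁰ + βb and rⁱ := r⁰ + β_i a. Define μ₁ := (β_i − βc)/(1 − c²), μ₂ := (β − β_i c)/(1 − c²), and z′ := r⁰ + μ₁a + μ₂b. If ‖z − rⁱ‖_D ≥ 1/n and ‖z′‖_D ≤ 2√n, then ‖z′ − r⁰‖_D² = ‖z − rⁱ‖_D² / (1 − c²), 1 − c² ≥ 1/(4n³), and |μ₁|, |μ₂| ≤ 8n³β. Consequently, for any λ ∈ ℝⁿ with λ ≥ 0, any index i, and β′ := ‖z′ − r⁰‖_D, if β′ ≥ β then the vector λ′ := (μ₁eⁱ + μ₂λ)/β′ satisfies λ′_j ≤ 8n³(λ_j + 1) for every j (where eⁱ is the i-th standard unit vector). -/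

import Mathlib

open Matrix

/-- Claim 4's supporting computation in the paper: bounds on the multipliers
`μ₁, μ₂` of one iteration, and the resulting bound `λ'_j ≤ 8n³(λ_j + 1)`. -/
theorem statement12 {n : ℕ} (hn : 0 < n)
    (D : Matrix (Fin n) (Fin n) ℝ) (hD : D.PosDef)
    (r0 a b : Fin n → ℝ)
    (ha : a ⬝ᵥ D *ᵥ a = 1) (hb : b ⬝ᵥ D *ᵥ b = 1)
    (hra : r0 ⬝ᵥ D *ᵥ a = 0) (hrb : r0 ⬝ᵥ D *ᵥ b = 0)
    (c : ℝ) (hc : c = a ⬝ᵥ D *ᵥ b) (hc2 : c ^ 2 < 1)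
    (β βi : ℝ) (hβ : 0 < β) (hβi : |βi| ≤ β)
    (z ri : Fin n → ℝ) (hz : z = r0 + β • b) (hri : ri = r0 + βi • a)
    (μ1 μ2 : ℝ)
    (hμ1 : μ1 = (βi - β * c) / (1 - c ^ 2))
    (hμ2 : μ2 = (β - βi * c) / (1 - c ^ 2))
    (z' : Fin n → ℝ) (hz' : z' = r0 + μ1 • a + μ2 • b)
    (hdist : 1 / (n : ℝ) ≤ Real.sqrt ((z - ri) ⬝ᵥ D *ᵥ (z - ri)))
    (hz'norm : Real.sqrt (z' ⬝ᵥ D *ᵥ z') ≤ 2 * Real.sqrt (n : ℝ)) :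
    (z' - r0) ⬝ᵥ D *ᵥ (z' - r0) = ((z - ri) ⬝ᵥ D *ᵥ (z - ri)) / (1 - c ^ 2) ∧
    1 / (4 * (n : ℝ) ^ 3) ≤ 1 - c ^ 2 ∧
    |μ1| ≤ 8 * (n : ℝ) ^ 3 * β ∧ |μ2| ≤ 8 * (n : ℝ) ^ 3 * β ∧
    (∀ (lam : Fin n → ℝ), (∀ j, 0 ≤ lam j) → ∀ (i : Fin n) (β' : ℝ),
      β' = Real.sqrt ((z' - r0) ⬝ᵥ D *ᵥ (z' - r0)) → β ≤ β' →
      ∀ j, (μ1 * (if j = i then (1 : ℝ) else 0) + μ2 * lam j) / β' ≤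
        8 * (n : ℝ) ^ 3 * (lam j + 1)) := by
  have hsym : ∀ x y : Fin n → ℝ, x ⬝ᵥ D *ᵥ y = y ⬝ᵥ D *ᵥ x := by
    intro x y
    have ht : Dᵀ = D := by
      rw [← conjTranspose_eq_transpose_of_trivial]; exact hD.isHermitian
    rw [dotProduct_mulVec, ← mulVec_transpose, ht, dotProduct_comm]
  have har : a ⬝ᵥ D *ᵥ r0 = 0 := by rw [hsym]; exact hra
  have hbr : b ⬝ᵥ D *ᵥ r0 = 0 := by rw [hsym]; exact hrb
  have hba : b ⬝ᵥ D *ᵥ a = c := by rw [hsym, hc]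
  have hpos1c : 0 < 1 - c ^ 2 := by linarith
  -- expansion lemma
  have key : ∀ s t : ℝ, (s • a + t • b) ⬝ᵥ D *ᵥ (s • a + t • b)
      = s ^ 2 + t ^ 2 + 2 * s * t * c := by
    intro s t
    simp only [mulVec_add, mulVec_smul, dotProduct_add, add_dotProduct,
      smul_dotProduct, dotProduct_smul, smul_eq_mul, ha, hb, hba, ← hc]
    ring
  have hzri : z - ri = (-βi) • a + β • b := by
    rw [hz, hri]; funext j; simp; ring
  have hq : (z - ri) ⬝ᵥ D *ᵥ (z - ri) = βi ^ 2 + β ^ 2 - 2 * β * βi * c := by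
    rw [hzri, key]; ring
  have hzr0 : z' - r0 = μ1 • a + μ2 • b := by
    rw [hz']; funext j; simp; ring
  have hq' : (z' - r0) ⬝ᵥ D *ᵥ (z' - r0) = μ1 ^ 2 + μ2 ^ 2 + 2 * μ1 * μ2 * c := by
    rw [hzr0, key]
  -- first conclusion
  have hmain : (z' - r0) ⬝ᵥ D *ᵥ (z' - r0)
      = ((z - ri) ⬝ᵥ D *ᵥ (z - ri)) / (1 - c ^ 2) := by
    rw [hq, hq', hμ1, hμ2]
    field_simp
    ring
  -- `z'` splits orthogonally
  have hz'split : z' ⬝ᵥ D *ᵥ z' = r0 ⬝ᵥ D *ᵥ r0 + (z' - r0) ⬝ᵥ D *ᵥ (z' - r0) := by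
    have h0 : z' = r0 + (μ1 • a + μ2 • b) := by rw [hz']; funext j; simp; ring
    rw [hzr0, h0]
    simp only [mulVec_add, mulVec_smul, dotProduct_add, add_dotProduct,
      smul_dotProduct, dotProduct_smul, smul_eq_mul, hra, hrb, har, hbr]
    ring
  have hr0nn : 0 ≤ r0 ⬝ᵥ D *ᵥ r0 := by simpa using hD.posSemidef.dotProduct_mulVec_nonneg r0
  have hqnn : 0 ≤ (z - ri) ⬝ᵥ D *ᵥ (z - ri) := by simpa using hD.posSemidef.dotProduct_mulVec_nonneg (z - ri)
  have hq'nn : 0 ≤ (z' - r0) ⬝ᵥ D *ᵥ (z' - r0) := by simpa using hD.posSemidef.dotProduct_mulVec_nonneg (z' - r0)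
  have hz'nn : 0 ≤ z' ⬝ᵥ D *ᵥ z' := by simpa using hD.posSemidef.dotProduct_mulVec_nonneg z'
  have hnpos : (0 : ℝ) < n := by exact_mod_cast hn
  -- q ≥ 1/n²
  have hqlb : 1 / (n : ℝ) ^ 2 ≤ (z - ri) ⬝ᵥ D *ᵥ (z - ri) := by
    have h1 : (1 / (n : ℝ)) ^ 2 ≤ Real.sqrt ((z - ri) ⬝ᵥ D *ᵥ (z - ri)) ^ 2 := by
      apply pow_le_pow_left₀ (by positivity) hdist
    rw [Real.sq_sqrt hqnn, div_pow, one_pow] at h1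
    exact h1
  -- z' norm sq ≤ 4n
  have hz'ub : z' ⬝ᵥ D *ᵥ z' ≤ 4 * n := by
    have h1 : Real.sqrt (z' ⬝ᵥ D *ᵥ z') ^ 2 ≤ (2 * Real.sqrt (n : ℝ)) ^ 2 := by
      apply pow_le_pow_left₀ (Real.sqrt_nonneg _) hz'norm
    rw [Real.sq_sqrt hz'nn, mul_pow, Real.sq_sqrt (le_of_lt hnpos)] at h1
    linarith
  have hq'ub : (z' - r0) ⬝ᵥ D *ᵥ (z' - r0) ≤ 4 * n := by linarith [hz'split ▸ hz'ub]
  -- 1 - c² ≥ 1/(4n³)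
  have hcε : 1 / (4 * (n : ℝ) ^ 3) ≤ 1 - c ^ 2 := by
    have hrel : (z' - r0) ⬝ᵥ D *ᵥ (z' - r0) * (1 - c ^ 2) = (z - ri) ⬝ᵥ D *ᵥ (z - ri) := by
      rw [hmain, div_mul_cancel₀ _ (ne_of_gt hpos1c)]
    have h1 : 1 / (n : ℝ) ^ 2 ≤ 4 * n * (1 - c ^ 2) := by
      calc 1 / (n : ℝ) ^ 2 ≤ (z - ri) ⬝ᵥ D *ᵥ (z - ri) := hqlb
        _ = (z' - r0) ⬝ᵥ D *ᵥ (z' - r0) * (1 - c ^ 2) := hrel.symm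
        _ ≤ 4 * n * (1 - c ^ 2) := by
            apply mul_le_mul_of_nonneg_right hq'ub (le_of_lt hpos1c)
    rw [div_le_iff₀ (by positivity)]
    rw [div_le_iff₀ (by positivity)] at h1
    have h2 : 4 * (n : ℝ) * (1 - c ^ 2) * (n : ℝ) ^ 2 = (1 - c ^ 2) * (4 * (n : ℝ) ^ 3) := by
      ring
    linarith
  -- |c| ≤ 1
  have hcabs : |c| ≤ 1 := (sq_le_one_iff_abs_le_one c).mp (le_of_lt hc2)
  have hn3pos : (0 : ℝ) < 4 * (n : ℝ) ^ 3 := by positivity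
  have hinv : 1 - c ^ 2 ≥ 1 / (4 * (n : ℝ) ^ 3) := hcε
  have hμbound : ∀ μ x : ℝ, μ = x / (1 - c ^ 2) → |x| ≤ 2 * β →
      |μ| ≤ 8 * (n : ℝ) ^ 3 * β := by
    intro μ x hμ hx
    rw [hμ, abs_div, abs_of_pos hpos1c]
    rw [div_le_iff₀ hpos1c]
    calc |x| ≤ 2 * β := hx
      _ ≤ (8 * (n : ℝ) ^ 3 * β) * (1 - c ^ 2) := by
          have h2 : (8 * (n : ℝ) ^ 3 * β) * (1 / (4 * (n : ℝ) ^ 3))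
              ≤ (8 * (n : ℝ) ^ 3 * β) * (1 - c ^ 2) := by
            apply mul_le_mul_of_nonneg_left hcε (by positivity)
          calc 2 * β = (8 * (n : ℝ) ^ 3 * β) * (1 / (4 * (n : ℝ) ^ 3)) := by
                field_simp; ring
            _ ≤ _ := h2
  have hμ1b : |μ1| ≤ 8 * (n : ℝ) ^ 3 * β := by
    apply hμbound _ _ hμ1
    calc |βi - β * c| ≤ |βi| + |β * c| := abs_sub _ _
      _ ≤ β + β := by
          gcongr
          rw [abs_mul, abs_of_pos hβ]
          calc β * |c| ≤ β * 1 := mul_le_mul_of_nonneg_left hcabs (le_of_lt hβ)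
            _ = β := mul_one β
      _ = 2 * β := by ring
  have hμ2b : |μ2| ≤ 8 * (n : ℝ) ^ 3 * β := by
    apply hμbound _ _ hμ2
    calc |β - βi * c| ≤ |β| + |βi * c| := abs_sub _ _
      _ ≤ β + β := by
          gcongr
          · exact le_of_eq (abs_of_pos hβ)
          · rw [abs_mul]
            calc |βi| * |c| ≤ β * 1 :=
                  mul_le_mul hβi hcabs (abs_nonneg c) (le_of_lt hβ)
              _ = β := mul_one β
      _ = 2 * β := by ring
  refine ⟨hmain, hcε, hμ1b, hμ2b, ?_⟩
  intro lam hlam i β' hβ' hββ'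
  intro j
  have hβ'pos : 0 < β' := lt_of_lt_of_le hβ hββ'
  have hnum : μ1 * (if j = i then (1 : ℝ) else 0) + μ2 * lam j
      ≤ 8 * (n : ℝ) ^ 3 * β * (lam j + 1) := by
    have h1 : μ1 * (if j = i then (1 : ℝ) else 0) ≤ 8 * (n : ℝ) ^ 3 * β := by
      split
      · simpa using (le_abs_self μ1).trans hμ1b
      · simp; positivity
    have h2 : μ2 * lam j ≤ 8 * (n : ℝ) ^ 3 * β * lam j := by
      apply mul_le_mul_of_nonneg_right _ (hlam j)
      exact (le_abs_self μ2).trans hμ2b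
    have h3 : 8 * (n : ℝ) ^ 3 * β * (lam j + 1)
        = 8 * (n : ℝ) ^ 3 * β * lam j + 8 * (n : ℝ) ^ 3 * β := by ring
    linarith
  calc (μ1 * (if j = i then (1 : ℝ) else 0) + μ2 * lam j) / β'
      ≤ (8 * (n : ℝ) ^ 3 * β * (lam j + 1)) / β' := by
        gcongr
    _ ≤ (8 * (n : ℝ) ^ 3 * β * (lam j + 1)) / β := by
        have hl := hlam j
        gcongr
    _ = 8 * (n : ℝ) ^ 3 * (lam j + 1) := by field_simp
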